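/- Fractional Riemann–Lebesgue lemma: for f ∈ e_{-α}L^1(T^n_α), |F_α(f)(m)| → 0 as |m| → ∞. -/

import Mathlib

open MeasureTheory Filter

noncomputable section

/-- The fractional torus, realized as the cube `[-|sin α|/2, |sin α|/2]^n`. -/
def Tor (α : ℝ) (n : ℕ) : Set (Fin n → ℝ) :=
  Set.univ.pi fun _ => Set.Icc (-(|Real.sin α| / 2)) (|Real.sin α| / 2)

/-- The chirp `e_α(x) = e^{π i |x|² cot α}`. -/
def eA (α : ℝ) {n : ℕ} (x : Fin n → ℝ) : ℂ :=
  Complex.exp (Complex.I * ((Real.pi * (∑ i, x i ^ 2) * (Real.cos α / Real.sin α) : ℝ) : ℂ))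

/-- `A_α = √(1 - i cot α)`. -/
def Acoef (α : ℝ) : ℂ := (1 - Complex.I * ((Real.cos α / Real.sin α : ℝ) : ℂ)) ^ (1 / 2 : ℂ)

/-- The kernel `K_α(m,x) = A_α^n e_α(x) e^{-2π i (m·x) csc α} e_α(m)`. -/
def Kk (α : ℝ) {n : ℕ} (m : Fin n → ℤ) (x : Fin n → ℝ) : ℂ :=
  Acoef α ^ n * eA α x *
    Complex.exp (-(Complex.I * ((2 * Real.pi * (∑ i, (m i : ℝ) * x i) / Real.sin α : ℝ) : ℂ))) *
    eA α fun i => (m i : ℝ)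

/-- The `m`-th fractional Fourier coefficient of order `α`. -/
def Fcoef (α : ℝ) {n : ℕ} (f : (Fin n → ℝ) → ℂ) (m : Fin n → ℤ) : ℂ :=
  ∫ x in Tor α n, f x * Kk α m x

/-- `|sin α|`-periodicity in every coordinate. -/
def Per (α : ℝ) {n : ℕ} (f : (Fin n → ℝ) → ℂ) : Prop :=
  ∀ (x : Fin n → ℝ) (k : Fin n → ℤ), f (fun i => x i + k i * |Real.sin α|) = f x

theorem stmt18 (α : ℝ) (hα : ∀ k : ℤ, α ≠ k * Real.pi) (n : ℕ)
    (f : (Fin n → ℝ) → ℂ)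
    (hper : Per α fun x => eA α x * f x)
    (hf : IntegrableOn (fun x => eA α x * f x) (Tor α n)) :
    Tendsto (fun m : Fin n → ℤ => ‖Fcoef α f m‖) cofinite (nhds 0) := by
  classical
  have hs0 : Real.sin α ≠ 0 := by
    intro h
    rcases Real.sin_eq_zero_iff.mp h with ⟨k, hk⟩
    exact hα k hk.symm
  set s := Real.sin α with hs
  -- the function on the torus, extended by zero
  set g : (Fin n → ℝ) → ℂ := Set.indicator (Tor α n) (fun x => eA α x * f x) with hg
  -- the dual functionals
  set W : (Fin n → ℤ) → ((Fin n → ℝ) →L[ℝ] ℝ) :=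
    fun m => s⁻¹ • (∑ i, ((m i : ℝ)) • ContinuousLinearMap.proj (R := ℝ)
      (φ := fun _ : Fin n => ℝ) i) with hW
  have hWval : ∀ (m : Fin n → ℤ) (x : Fin n → ℝ),
      W m x = (∑ i, (m i : ℝ) * x i) / s := by
    intro m x
    simp [hW, ContinuousLinearMap.sum_apply, div_eq_inv_mul, Finset.mul_sum]
  -- Riemann-Lebesgue
  have hRL : Tendsto (fun w : (Fin n → ℝ) →L[ℝ] ℝ => ∫ v, Real.fourierChar (-w v) • g v)
      (cocompact _) (nhds 0) := tendsto_integral_exp_smul_cocompact (f := g) volume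
  -- W tends to cocompact
  have hWt : Tendsto W cofinite (cocompact ((Fin n → ℝ) →L[ℝ] ℝ)) := by
    rw [hasBasis_cocompact.tendsto_right_iff]
    intro K hK
    obtain ⟨C, hC⟩ := isBounded_iff_forall_norm_le.mp hK.isBounded
    rw [Filter.eventually_cofinite]
    have hsub : {m : Fin n → ℤ | ¬ W m ∈ Kᶜ} ⊆
        Set.univ.pi fun _ : Fin n => (Set.Icc (-⌈C * |s|⌉) ⌈C * |s|⌉ : Set ℤ) := by
      intro m hm
      simp only [Set.mem_setOf_eq, Set.mem_compl_iff, not_not] at hm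
      have hnorm : ‖W m‖ ≤ C := hC _ hm
      intro i _
      -- evaluate W m at the basis vector
      have hone : ‖(Pi.single i 1 : Fin n → ℝ)‖ ≤ 1 := by
        refine pi_norm_le_iff_of_nonneg zero_le_one |>.mpr fun j => ?_
        rcases eq_or_ne j i with rfl | hji
        · simp
        · simp [Pi.single_apply, hji]
      have hev : W m (Pi.single i 1) = (m i : ℝ) / s := by
        rw [hWval]
        congr 1
        simp [Pi.single_apply, mul_ite, Finset.sum_ite_eq']
      have h1 : |(m i : ℝ) / s| ≤ C := by
        rw [← hev, ← Real.norm_eq_abs]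
        calc ‖W m (Pi.single i 1)‖ ≤ ‖W m‖ * ‖(Pi.single i 1 : Fin n → ℝ)‖ :=
              (W m).le_opNorm _
          _ ≤ C * 1 := mul_le_mul hnorm hone (norm_nonneg _) ((norm_nonneg _).trans hnorm)
          _ = C := mul_one C
      have h2 : |(m i : ℝ)| ≤ C * |s| := by
        rw [abs_div] at h1
        exact (div_le_iff₀ (abs_pos.mpr hs0)).mp h1
      have h3 : |m i| ≤ ⌈C * |s|⌉ := by
        have : ((|m i| : ℤ) : ℝ) ≤ (⌈C * |s|⌉ : ℝ) := by
          push_cast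
          exact h2.trans (Int.le_ceil _)
        exact_mod_cast this
      exact Set.mem_Icc.mpr (abs_le.mp h3)
    exact (Set.Finite.pi fun _ => Set.finite_Icc _ _).subset hsub
  have key : Tendsto (fun m : Fin n → ℤ => ∫ v, Real.fourierChar (-(W m) v) • g v)
      cofinite (nhds 0) := hRL.comp hWt
  -- rewrite each Fourier coefficient
  have hmeasTor : MeasurableSet (Tor α n) :=
    MeasurableSet.univ_pi fun _ => measurableSet_Icc
  have hInt : ∀ m : Fin n → ℤ, (∫ v, Real.fourierChar (-(W m) v) • g v) =
      ∫ x in Tor α n,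
        Complex.exp (-(Complex.I * ((2 * Real.pi * (∑ i, (m i : ℝ) * x i) / s : ℝ) : ℂ))) *
          (eA α x * f x) := by
    intro m
    rw [← integral_indicator hmeasTor]
    congr 1
    funext v
    by_cases hv : v ∈ Tor α n
    · simp only [hg, Set.indicator_of_mem hv, Circle.smul_def, Real.fourierChar_apply]
      congr 2
      rw [hWval]
      push_cast
      ring
    · simp [hg, Set.indicator_of_notMem hv]
  have hFc : ∀ m : Fin n → ℤ, ‖Fcoef α f m‖ =
      ‖Acoef α ^ n‖ * ‖∫ v, Real.fourierChar (-(W m) v) • g v‖ := by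
    intro m
    have h1 : (fun x => f x * Kk α m x) = fun x =>
        (Acoef α ^ n * eA α fun i => ((m i : ℝ))) *
          (Complex.exp (-(Complex.I * ((2 * Real.pi * (∑ i, (m i : ℝ) * x i) / s : ℝ) : ℂ))) *
            (eA α x * f x)) := by
      funext x
      simp only [Kk]
      ring
    have heAnorm : ‖eA α fun i => ((m i : ℝ))‖ = 1 := by
      rw [eA, mul_comm, Complex.norm_exp_ofReal_mul_I]
    rw [Fcoef, h1, MeasureTheory.integral_const_mul, hInt m, norm_mul, norm_mul, heAnorm, mul_one]
  have h3 : Tendsto (fun m : Fin n → ℤ =>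
      ‖Acoef α ^ n‖ * ‖∫ v, Real.fourierChar (-(W m) v) • g v‖) cofinite
      (nhds (‖Acoef α ^ n‖ * ‖(0 : ℂ)‖)) := tendsto_const_nhds.mul key.norm
  simp only [norm_zero, mul_zero] at h3
  exact h3.congr fun m => (hFc m).symm
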